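/- arXiv:2603.14547 — 3 statements merged into one kernel-verified Lean document; each statement's English description precedes it below -/
import Mathlib

section
/- Let A ∈ ℝ^{m×n} have full column rank, w ∈ Δ_m°, μ > 0, r ∈ ℝ^m. Assume (a) the vectors u = (1,…,1)ᵀ and r² = (r_1²,…,r_m²)ᵀ are linearly independent, and (b) the matrix B = I_m - 2μ diag(r²) is positive definite on Range(W^{1/2}A). Then the (2+m+n)×(2+m+n) block matrix J = [[0,0,uᵀ,0],[0,0,(r²)ᵀ,0],[u,r²,W⁻¹,2μdiag(r)A],[0,0,(diag(r)A)ᵀ,AᵀWA]] is nonsingular. -/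
open Matrix

/-- Sufficient conditions for the invertibility of the Jacobian of the
stationarity system. -/
theorem jacobian_nonsingular (m n : ℕ) (hmn : n ≤ m)
    (A : Matrix (Fin m) (Fin n) ℝ) (hA : A.rank = n)
    (w : Fin m → ℝ) (hw : ∀ i, 0 < w i) (hw1 : (∑ i, w i) = 1)
    (μ : ℝ) (hμ : 0 < μ) (r : Fin m → ℝ)
    (hindep : LinearIndependent ℝ
      ![(fun _ => 1 : Fin m → ℝ), (fun i => (r i) ^ 2 : Fin m → ℝ)])
    (hBpos : ∀ v : Fin m → ℝ,
      (∃ z : Fin n → ℝ,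
        v = (Matrix.diagonal (fun i => Real.sqrt (w i)) * A) *ᵥ z) →
      v ≠ 0 →
      0 < v ⬝ᵥ ((1 - (2 * μ) • Matrix.diagonal (fun i => (r i) ^ 2)) *ᵥ v)) :
    let TR : Matrix (Fin 2) (Fin m ⊕ Fin n) ℝ :=
      fun i j => Sum.elim (fun k => if i = 0 then 1 else (r k) ^ 2) (fun _ => 0) j
    let BL : Matrix (Fin m ⊕ Fin n) (Fin 2) ℝ :=
      fun i j => Sum.elim (fun k => if j = 0 then 1 else (r k) ^ 2) (fun _ => 0) i
    let BR : Matrix (Fin m ⊕ Fin n) (Fin m ⊕ Fin n) ℝ :=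
      Matrix.fromBlocks (Matrix.diagonal w)⁻¹ ((2 * μ) • (Matrix.diagonal r * A))
        (Matrix.diagonal r * A)ᵀ (Aᵀ * Matrix.diagonal w * A)
    let J : Matrix (Fin 2 ⊕ (Fin m ⊕ Fin n)) (Fin 2 ⊕ (Fin m ⊕ Fin n)) ℝ :=
      Matrix.fromBlocks 0 TR BL BR
    J.det ≠ 0 := by
  intro TR BL BR J
  rw [Ne, ← Matrix.exists_mulVec_eq_zero_iff]
  rintro ⟨z, hz, hJz⟩
  apply hz
  have hwne : ∀ i, w i ≠ 0 := fun i => (hw i).ne'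
  have hinv : (Matrix.diagonal w)⁻¹ = Matrix.diagonal (fun i => (w i)⁻¹) := by
    refine Matrix.inv_eq_right_inv ?_
    rw [Matrix.diagonal_mul_diagonal]
    simp [mul_inv_cancel₀ (hwne _)]
  -- abbreviations
  set x : Fin n → ℝ := fun j => z (Sum.inr (Sum.inr j)) with hxdef
  set y : Fin m → ℝ := fun k => z (Sum.inr (Sum.inl k)) with hydef
  set t : Fin m → ℝ := fun k => ∑ j, A k j * x j with htdef
  set g : Fin m → ℝ := fun k => z (Sum.inl 0) + (r k) ^ 2 * z (Sum.inl 1) with hgdef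
  -- the four block equations
  have eq1 : ∑ k, y k = 0 := by
    have := congrFun hJz (Sum.inl 0)
    simp only [J, Matrix.mulVec, dotProduct, Fintype.sum_sum_type, Matrix.fromBlocks_apply₁₁,
      Matrix.fromBlocks_apply₁₂, Matrix.fromBlocks_apply₂₁, Matrix.fromBlocks_apply₂₂] at this
    simpa [J, TR, Matrix.mulVec, dotProduct, Fintype.sum_sum_type] using this
  have eq2 : ∑ k, (r k)^2 * y k = 0 := by
    have := congrFun hJz (Sum.inl 1)
    simp only [J, Matrix.mulVec, dotProduct, Fintype.sum_sum_type, Matrix.fromBlocks_apply₁₁,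
      Matrix.fromBlocks_apply₁₂, Matrix.fromBlocks_apply₂₁, Matrix.fromBlocks_apply₂₂] at this
    simpa [J, TR, Matrix.mulVec, dotProduct, Fintype.sum_sum_type] using this
  have eq3 : ∀ k, g k + (w k)⁻¹ * y k + 2 * μ * (r k * t k) = 0 := by
    intro k
    have := congrFun hJz (Sum.inr (Sum.inl k))
    simp only [J, Matrix.mulVec, dotProduct, Fintype.sum_sum_type, Matrix.fromBlocks_apply₁₁,
      Matrix.fromBlocks_apply₁₂, Matrix.fromBlocks_apply₂₁, Matrix.fromBlocks_apply₂₂] at this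
    simp [J, BL, BR, hinv, Matrix.mulVec, dotProduct, Fintype.sum_sum_type,
      Fin.sum_univ_two, Matrix.diagonal_apply, Finset.sum_ite_eq, Matrix.mul_apply,
      Finset.mul_sum, mul_assoc] at this
    have hs : ∑ j : Fin n, 2*(μ*(r k*(A k j * x j))) = 2*μ*(r k * t k) := by
      simp only [htdef, Finset.mul_sum]
      exact Finset.sum_congr rfl (fun j _ => by ring)
    rw [hs] at this
    simp only [hgdef]
    linarith
  have eq4 : ∀ j, (∑ k, r k * A k j * y k) + ∑ k, w k * A k j * t k = 0 := by
    intro j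
    have := congrFun hJz (Sum.inr (Sum.inr j))
    simp only [J, Matrix.mulVec, dotProduct, Fintype.sum_sum_type, Matrix.fromBlocks_apply₁₁,
      Matrix.fromBlocks_apply₁₂, Matrix.fromBlocks_apply₂₁, Matrix.fromBlocks_apply₂₂] at this
    simp [J, BL, BR, Matrix.mulVec, dotProduct, Fintype.sum_sum_type,
      Matrix.mul_apply, Matrix.transpose_apply, Matrix.diagonal_apply, mul_ite, ite_mul,
      Finset.sum_ite_eq, Finset.sum_ite_eq'] at this
    have h1 : ∑ k : Fin m, A k j * r k * z (Sum.inr (Sum.inl k)) =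
        ∑ k, r k * A k j * y k :=
      Finset.sum_congr rfl fun k _ => by simp only [hydef]; ring
    have h2 : ∑ i : Fin n, (∑ k : Fin m, A k j * w k * A k i) * z (Sum.inr (Sum.inr i)) =
        ∑ k, w k * A k j * t k := by
      simp_rw [Finset.sum_mul]
      rw [Finset.sum_comm]
      refine Finset.sum_congr rfl fun k _ => ?_
      simp only [htdef, Finset.mul_sum]
      exact Finset.sum_congr rfl fun i _ => by simp only [hxdef]; ring
    rw [h1, h2] at this
    exact this
  -- solve eq3 for y
  have hy : ∀ k, y k = -(w k) * (g k + 2 * μ * (r k * t k)) := by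
    intro k
    have h := eq3 k
    have h2 : (w k)⁻¹ * y k = -(g k + 2 * μ * (r k * t k)) := by linarith
    have := congrArg (fun s => w k * s) h2
    rw [← mul_assoc, mul_inv_cancel₀ (hwne k), one_mul] at this
    rw [this]; ring
  -- key scalar identity 1 : ∑ w g² + 2μ ∑ w g (r t) = 0
  have hgy : ∑ k, g k * y k = 0 := by
    have hsplit : ∑ k, g k * y k =
        z (Sum.inl 0) * ∑ k, y k + z (Sum.inl 1) * ∑ k, (r k)^2 * y k := by
      simp only [Finset.mul_sum, ← Finset.sum_add_distrib]
      exact Finset.sum_congr rfl fun k _ => by simp only [hgdef]; ring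
    rw [hsplit, eq1, eq2]; ring
  have hE1 : (∑ k, w k * (g k)^2) + 2*μ*(∑ k, w k * g k * (r k * t k)) = 0 := by
    have hptw : ∀ k ∈ Finset.univ, w k * (g k)^2 + 2*μ*(w k * g k * (r k * t k)) =
        -(g k * y k) := fun k _ => by rw [hy k]; ring
    have := Finset.sum_congr rfl hptw
    rw [Finset.sum_add_distrib, ← Finset.mul_sum] at this
    rw [this, Finset.sum_neg_distrib, hgy, neg_zero]
  -- key scalar identity 2 : ∑ r t y + ∑ w t² = 0
  have hE2 : (∑ k, r k * t k * y k) + ∑ k, w k * (t k)^2 = 0 := by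
    have h0 : ∑ j, x j * ((∑ k, r k * A k j * y k) + ∑ k, w k * A k j * t k) = 0 :=
      Finset.sum_eq_zero fun j _ => by rw [eq4 j, mul_zero]
    have ht : ∀ k, t k = ∑ j, A k j * x j := fun _ => rfl
    have hswap1 : ∑ j, x j * (∑ k, r k * A k j * y k) = ∑ k, r k * t k * y k := by
      simp only [Finset.mul_sum]
      rw [Finset.sum_comm]
      refine Finset.sum_congr rfl fun k _ => ?_
      rw [show r k * t k * y k = ∑ j, (A k j * x j) * (r k * y k) from by
        rw [← Finset.sum_mul, ← ht]; ring]
      exact Finset.sum_congr rfl fun j _ => by ring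
    have hswap2 : ∑ j, x j * (∑ k, w k * A k j * t k) = ∑ k, w k * (t k)^2 := by
      simp only [Finset.mul_sum]
      rw [Finset.sum_comm]
      refine Finset.sum_congr rfl fun k _ => ?_
      rw [show w k * (t k)^2 = ∑ j, (A k j * x j) * (w k * t k) from by
        rw [← Finset.sum_mul, ← ht]; ring]
      exact Finset.sum_congr rfl fun j _ => by ring
    simp only [mul_add, Finset.sum_add_distrib] at h0
    rw [hswap1, hswap2] at h0
    exact h0
  -- combine : Q = ∑ w g (r t), and 2μ * (∑ w g (r t)) = -∑ w g²
  have hQeq : (∑ k, w k * (t k)^2) - 2*μ*(∑ k, (r k)^2 * (w k * (t k)^2)) =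
      ∑ k, w k * g k * (r k * t k) := by
    have hptw : ∀ k ∈ Finset.univ,
        w k * (t k)^2 - 2*μ*((r k)^2 * (w k * (t k)^2)) - w k * g k * (r k * t k) =
        r k * t k * y k + w k * (t k)^2 := fun k _ => by rw [hy k]; ring
    have := Finset.sum_congr rfl hptw
    rw [Finset.sum_add_distrib] at this
    have h2 : ∑ k, (w k * (t k)^2 - 2*μ*((r k)^2 * (w k * (t k)^2)) - w k * g k * (r k * t k))
        = (∑ k, w k * (t k)^2) - 2*μ*(∑ k, (r k)^2 * (w k * (t k)^2))
          - ∑ k, w k * g k * (r k * t k) := by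
      rw [Finset.sum_sub_distrib, Finset.sum_sub_distrib, ← Finset.mul_sum]
    rw [h2] at this
    have := this.trans hE2
    linarith
  have hGnonneg : 0 ≤ ∑ k, w k * (g k)^2 :=
    Finset.sum_nonneg fun k _ => mul_nonneg (hw k).le (sq_nonneg _)
  have hQle : (∑ k, w k * (t k)^2) - 2*μ*(∑ k, (r k)^2 * (w k * (t k)^2)) ≤ 0 := by
    rw [hQeq]
    nlinarith [hE1, hGnonneg]
  -- the candidate vector v
  set v : Fin m → ℝ := fun k => Real.sqrt (w k) * t k with hvdef
  have hvrange : ∃ zz : Fin n → ℝ,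
      v = (Matrix.diagonal (fun i => Real.sqrt (w i)) * A) *ᵥ zz := by
    refine ⟨x, funext fun k => ?_⟩
    simp only [hvdef, Matrix.mulVec, dotProduct, Matrix.mul_apply, Matrix.diagonal_apply,
      ite_mul, zero_mul, Finset.sum_ite_eq, Finset.mem_univ, if_pos, htdef, Finset.mul_sum]
    exact Finset.sum_congr rfl fun j _ => by ring
  have hqf : v ⬝ᵥ ((1 - (2 * μ) • Matrix.diagonal (fun i => (r i) ^ 2)) *ᵥ v) =
      (∑ k, w k * (t k)^2) - 2*μ*(∑ k, (r k)^2 * (w k * (t k)^2)) := by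
    have hs : ∀ k, Real.sqrt (w k) * Real.sqrt (w k) = w k :=
      fun k => Real.mul_self_sqrt (hw k).le
    have hR : (∑ k, w k * (t k)^2) - 2*μ*(∑ k, (r k)^2 * (w k * (t k)^2)) =
        ∑ k, (w k * (t k)^2 - 2*μ*((r k)^2 * (w k * (t k)^2))) := by
      rw [Finset.sum_sub_distrib, Finset.mul_sum]
    rw [hR]
    simp only [dotProduct, Matrix.sub_mulVec, Matrix.smul_mulVec, Matrix.one_mulVec,
      Matrix.mulVec_diagonal, Pi.sub_apply, Pi.smul_apply, smul_eq_mul]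
    refine Finset.sum_congr rfl fun k _ => ?_
    simp only [hvdef]
    linear_combination (t k ^ 2 - 2*μ*(r k ^ 2 * t k ^ 2)) * hs k
  -- v must vanish
  have hv0 : v = 0 := by
    by_contra hvne
    have := hBpos v hvrange hvne
    rw [hqf] at this
    linarith
  have ht0 : ∀ k, t k = 0 := by
    intro k
    have := congrFun hv0 k
    simp only [hvdef, Pi.zero_apply] at this
    have hsne : Real.sqrt (w k) ≠ 0 := Real.sqrt_ne_zero'.mpr (hw k)
    exact (mul_eq_zero.mp this).resolve_left hsne
  -- hence g = 0
  have hG0 : ∑ k, w k * (g k)^2 = 0 := by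
    have h : ∑ k, w k * g k * (r k * t k) = 0 :=
      Finset.sum_eq_zero fun k _ => by rw [ht0 k]; ring
    rw [h, mul_zero, add_zero] at hE1
    exact hE1
  have hg0 : ∀ k, g k = 0 := by
    intro k
    have := (Finset.sum_eq_zero_iff_of_nonneg
        (fun k _ => mul_nonneg (hw k).le (sq_nonneg (g k)))).mp hG0 k (Finset.mem_univ k)
    have := (mul_eq_zero.mp this).resolve_left (hwne k)
    exact pow_eq_zero_iff (by norm_num) |>.mp this
  -- linear independence kills the multipliers
  have hlam : z (Sum.inl 0) = 0 ∧ z (Sum.inl 1) = 0 := by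
    have := Fintype.linearIndependent_iff.mp hindep ![z (Sum.inl 0), z (Sum.inl 1)] ?_
    · exact ⟨this 0, this 1⟩
    · funext k
      have := hg0 k
      simp only [hgdef] at this
      simp [Fin.sum_univ_two]
      linarith
  -- y = 0
  have hy0 : ∀ k, y k = 0 := by
    intro k
    rw [hy k, hg0 k, ht0 k]; ring
  -- x = 0 by full column rank
  have hx0 : x = 0 := by
    have hAx : A *ᵥ x = 0 := funext fun k => ht0 k
    have h2 : LinearMap.ker A.mulVecLin = ⊥ := by
      have h3 := LinearMap.finrank_range_add_finrank_ker A.mulVecLin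
      rw [show Module.finrank ℝ (LinearMap.range A.mulVecLin) = A.rank from rfl, hA,
        Module.finrank_pi, Fintype.card_fin] at h3
      have : Module.finrank ℝ (LinearMap.ker A.mulVecLin) = 0 := by omega
      exact Submodule.finrank_eq_zero.mp this
    have h1 : x ∈ LinearMap.ker A.mulVecLin := hAx
    simpa [h2] using h1
  -- conclude z = 0
  funext i
  rcases i with i | k
  · fin_cases i
    · exact hlam.1
    · exact hlam.2
  · rcases k with k | j
    · exact hy0 k
    · exact congrFun hx0 j
end

section
/- If the symmetric 2×2 block matrix H̃ = [[W⁻¹, 2μdiag(r)A],[2μ(diag(r)A)ᵀ, 2μAᵀWA]] is positive definite, and (α,β,γ,η) satisfies uᵀγ = 0, (r²)ᵀγ = 0, αu + βr² + W⁻¹γ + 2μdiag(r)Aη = 0, and (diag(r)A)ᵀγ + AᵀWAη = 0, and u, r² are linearly independent, then α = β = 0, γ = 0, η = 0. -/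
open Matrix

/-- Kernel triviality step: if the bordered block `H̃` is positive definite and
`u, r²` are linearly independent, the homogeneous system has only the trivial
solution. -/
theorem kernel_trivial (m n : ℕ) (hmn : n ≤ m)
    (A : Matrix (Fin m) (Fin n) ℝ)
    (w : Fin m → ℝ) (hw : ∀ i, 0 < w i) (μ : ℝ) (hμ : 0 < μ) (r : Fin m → ℝ)
    (Ht : Matrix (Fin m ⊕ Fin n) (Fin m ⊕ Fin n) ℝ)
    (hHt : Ht = Matrix.fromBlocks (Matrix.diagonal w)⁻¹
      ((2 * μ) • (Matrix.diagonal r * A))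
      ((2 * μ) • (Matrix.diagonal r * A)ᵀ)
      ((2 * μ) • (Aᵀ * Matrix.diagonal w * A)))
    (hpos : Ht.PosDef)
    (hindep : LinearIndependent ℝ
      ![(fun _ => 1 : Fin m → ℝ), (fun i => (r i) ^ 2 : Fin m → ℝ)])
    (α β : ℝ) (γ : Fin m → ℝ) (η : Fin n → ℝ)
    (h1 : (fun _ => (1 : ℝ)) ⬝ᵥ γ = 0)
    (h2 : (fun i => (r i) ^ 2) ⬝ᵥ γ = 0)
    (h3 : (fun i => α * 1 + β * (r i) ^ 2) + (Matrix.diagonal w)⁻¹ *ᵥ γ +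
      (2 * μ) • ((Matrix.diagonal r * A) *ᵥ η) = 0)
    (h4 : (Matrix.diagonal r * A)ᵀ *ᵥ γ + (Aᵀ * Matrix.diagonal w * A) *ᵥ η = 0) :
    α = 0 ∧ β = 0 ∧ γ = 0 ∧ η = 0 := by
  -- The combined vector
  set x : Fin m ⊕ Fin n → ℝ := Sum.elim γ η with hx
  -- key: quadratic form vanishes
  have hblock : Ht *ᵥ x = Sum.elim
      ((Matrix.diagonal w)⁻¹ *ᵥ γ + ((2 * μ) • (Matrix.diagonal r * A)) *ᵥ η)
      (((2 * μ) • (Matrix.diagonal r * A)ᵀ) *ᵥ γ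
        + ((2 * μ) • (Aᵀ * Matrix.diagonal w * A)) *ᵥ η) := by
    rw [hHt, hx, Matrix.fromBlocks_mulVec]
    simp [Sum.elim_comp_inl, Sum.elim_comp_inr]
  have hE1 : γ ⬝ᵥ ((Matrix.diagonal w)⁻¹ *ᵥ γ
      + ((2 * μ) • (Matrix.diagonal r * A)) *ᵥ η) = 0 := by
    have h3' : (Matrix.diagonal w)⁻¹ *ᵥ γ + ((2 * μ) • (Matrix.diagonal r * A)) *ᵥ η
        = -(fun i => α * 1 + β * (r i) ^ 2) := by
      have := h3
      rw [Matrix.smul_mulVec] at *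
      funext i
      have := congrFun h3 i
      simp only [Pi.add_apply, Pi.neg_apply, Pi.smul_apply, Pi.zero_apply] at this ⊢
      linarith
    rw [h3']
    simp only [dotProduct, Pi.neg_apply]
    have key : ∀ i, γ i * -(α * 1 + β * r i ^ 2)
        = -α * (1 * γ i) + -β * (r i ^ 2 * γ i) := fun i => by ring
    simp_rw [key, Finset.sum_add_distrib, ← Finset.mul_sum]
    have e1 := h1; have e2 := h2
    simp only [dotProduct] at e1 e2
    simp only [one_mul] at e1 ⊢
    rw [e1, e2]; ring
  have hE2 : η ⬝ᵥ (((2 * μ) • (Matrix.diagonal r * A)ᵀ) *ᵥ γ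
      + ((2 * μ) • (Aᵀ * Matrix.diagonal w * A)) *ᵥ η) = 0 := by
    have h4' : (Matrix.diagonal r * A)ᵀ *ᵥ γ = -((Aᵀ * Matrix.diagonal w * A) *ᵥ η) := by
      rw [eq_neg_iff_add_eq_zero]; exact h4
    rw [Matrix.smul_mulVec, Matrix.smul_mulVec, h4']
    simp [dotProduct_add, dotProduct_smul]
  have hquad : x ⬝ᵥ (Ht *ᵥ x) = 0 := by
    rw [hblock, hx]
    rw [show (Sum.elim γ η ⬝ᵥ Sum.elim _ _ : ℝ) = _ from sumElim_dotProduct_sumElim _ _ _ _]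
    rw [hE1, hE2]; ring
  have hx0 : x = 0 := by
    by_contra hne
    have := hpos.dotProduct_mulVec_pos hne
    rw [show (star x : Fin m ⊕ Fin n → ℝ) = x from rfl] at this
    rw [hquad] at this
    exact lt_irrefl 0 this
  have hγ : γ = 0 := by
    funext i; exact congrFun hx0 (Sum.inl i)
  have hη : η = 0 := by
    funext j; exact congrFun hx0 (Sum.inr j)
  -- now α, β
  have hαβ : (fun i => α * 1 + β * (r i) ^ 2 : Fin m → ℝ) = 0 := by
    have := h3
    rw [hγ, hη] at this
    simpa using this
  have hlin := Fintype.linearIndependent_iff.mp hindep ![α, β] ?_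
  · exact ⟨by simpa using hlin 0, by simpa using hlin 1, hγ, hη⟩
  · funext i
    have := congrFun hαβ i
    simp only [Pi.add_apply, Pi.zero_apply] at this
    simp [Fin.sum_univ_two]
    linarith
end

section
/- Suppose A ∈ ℝ^{m×n} satisfies AᵀWA ⪰ s₀² I_n for a diagonal W = diag(w) with w_i ≥ 0 and ∑_i w_i = 1, and some s₀ > 0. Let ε₀ = s₀²/‖A‖², and let I = {i : w_i ≥ ε₀}. Then |I| ≥ n, and the submatrix of A formed by the rows indexed by I has full column rank n. -/
open Matrix Finset

/-- Under uniform coercivity of `AᵀWA`, the set of indices whose weight exceeds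
`ε₀ = s₀²/‖A‖²` has cardinality at least `n` and the corresponding rows of `A`
have full column rank. -/
theorem core_index_set (m n : ℕ)
    (A : Matrix (Fin m) (Fin n) ℝ) (b : Fin m → ℝ)
    (w : Fin m → ℝ) (hw : ∀ i, 0 ≤ w i) (hw1 : (∑ i, w i) = 1)
    (s₀ : ℝ) (hs₀ : 0 < s₀)
    (hcoer : ∀ v : Fin n → ℝ,
      s₀ ^ 2 * (v ⬝ᵥ v) ≤ v ⬝ᵥ ((Aᵀ * Matrix.diagonal w * A) *ᵥ v))
    (nA : ℝ) (hnA : 0 < nA)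
    (hspec : ∀ v : Fin n → ℝ, (A *ᵥ v) ⬝ᵥ (A *ᵥ v) ≤ nA ^ 2 * (v ⬝ᵥ v))
    (ε₀ : ℝ) (hε₀ : ε₀ = s₀ ^ 2 / nA ^ 2)
    (I : Finset (Fin m)) (hI : I = {i : Fin m | ε₀ ≤ w i}.toFinset) :
    n ≤ I.card ∧
    (A.submatrix (Subtype.val : {i // i ∈ I} → Fin m) id).rank = n := by
  have hε₀pos : 0 < ε₀ := by
    rw [hε₀]; positivity
  -- key: rows indexed by I annihilating v forces v = 0
  have key : ∀ v : Fin n → ℝ, (∀ i ∈ I, (A *ᵥ v) i = 0) → v = 0 := by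
    intro v hv
    by_contra hvne
    have hvv : 0 < v ⬝ᵥ v := by
      have h0 : 0 ≤ v ⬝ᵥ v := Finset.sum_nonneg fun i _ => mul_self_nonneg _
      have hne : v ⬝ᵥ v ≠ 0 := fun h => hvne (dotProduct_self_eq_zero.mp h)
      exact lt_of_le_of_ne h0 (Ne.symm hne)
    set u := A *ᵥ v with hu
    have hquad : v ⬝ᵥ ((Aᵀ * Matrix.diagonal w * A) *ᵥ v) = ∑ i, w i * u i ^ 2 := by
      rw [← Matrix.mulVec_mulVec, ← Matrix.mulVec_mulVec,
        Matrix.dotProduct_mulVec, Matrix.vecMul_transpose]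
      simp [hu, dotProduct, Matrix.mulVec_diagonal, mul_comm, pow_two, mul_assoc,
        mul_left_comm]
    have hsum : s₀ ^ 2 * (v ⬝ᵥ v) ≤ ∑ i, w i * u i ^ 2 := hquad ▸ hcoer v
    have hvanish : ∀ i ∈ I, w i * u i ^ 2 = 0 := by
      intro i hiI; rw [hv i hiI]; ring
    have hsplit : ∑ i, w i * u i ^ 2 = ∑ i ∈ Iᶜ, w i * u i ^ 2 := by
      rw [← Finset.sum_add_sum_compl I]
      rw [Finset.sum_eq_zero hvanish, zero_add]
    have hpos : 0 < ∑ i ∈ Iᶜ, w i * u i ^ 2 := by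
      rw [← hsplit]
      calc (0:ℝ) < s₀ ^ 2 * (v ⬝ᵥ v) := by positivity
      _ ≤ _ := hsum
    obtain ⟨i₀, hi₀c, hi₀⟩ : ∃ i ∈ Iᶜ, 0 < w i * u i ^ 2 := by
      by_contra h
      push_neg at h
      have : ∑ i ∈ Iᶜ, w i * u i ^ 2 ≤ 0 := Finset.sum_nonpos h
      linarith
    have hwlt : ∀ i ∈ Iᶜ, w i < ε₀ := by
      intro i hi
      have : i ∉ I := Finset.mem_compl.mp hi
      rw [hI] at this
      simp only [Set.mem_toFinset, Set.mem_setOf_eq] at this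
      linarith [not_le.mp this]
    have hstrict : ∑ i ∈ Iᶜ, w i * u i ^ 2 < ∑ i ∈ Iᶜ, ε₀ * u i ^ 2 := by
      apply Finset.sum_lt_sum
      · intro i hi
        exact mul_le_mul_of_nonneg_right (hwlt i hi).le (sq_nonneg _)
      · refine ⟨i₀, hi₀c, ?_⟩
        have hu0 : 0 < u i₀ ^ 2 := by
          rcases lt_trichotomy (u i₀ ^ 2) 0 with h | h | h
          · linarith [sq_nonneg (u i₀)]
          · rw [h] at hi₀; linarith
          · exact h
        exact mul_lt_mul_of_pos_right (hwlt i₀ hi₀c) hu0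
    have hbound : ∑ i ∈ Iᶜ, ε₀ * u i ^ 2 ≤ ε₀ * (nA ^ 2 * (v ⬝ᵥ v)) := by
      rw [← Finset.mul_sum]
      apply mul_le_mul_of_nonneg_left _ hε₀pos.le
      have h1 : ∑ i ∈ Iᶜ, u i ^ 2 ≤ ∑ i, u i ^ 2 :=
        Finset.sum_le_sum_of_subset_of_nonneg (Finset.subset_univ _)
          (fun i _ _ => sq_nonneg _)
      have h2 : ∑ i, u i ^ 2 = u ⬝ᵥ u := by
        simp [dotProduct, pow_two]
      calc ∑ i ∈ Iᶜ, u i ^ 2 ≤ u ⬝ᵥ u := h2 ▸ h1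
        _ ≤ nA ^ 2 * (v ⬝ᵥ v) := hspec v
    have hfinal : ε₀ * (nA ^ 2 * (v ⬝ᵥ v)) = s₀ ^ 2 * (v ⬝ᵥ v) := by
      rw [hε₀]; field_simp
    rw [hsplit] at hsum
    linarith
  -- injectivity of the submatrix action
  set B := A.submatrix (Subtype.val : {i // i ∈ I} → Fin m) id with hB
  have hker : LinearMap.ker B.mulVecLin = ⊥ := by
    rw [LinearMap.ker_eq_bot']
    intro v hv
    apply key
    intro i hiI
    have := congrFun hv ⟨i, hiI⟩
    simpa [hB, Matrix.mulVecLin_apply, Matrix.mulVec, Matrix.submatrix, dotProduct] using this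
  have hrank : B.rank = n := by
    rw [Matrix.rank]
    rw [LinearMap.finrank_range_of_inj (LinearMap.ker_eq_bot.mp hker)]
    simp
  refine ⟨?_, hrank⟩
  have := Matrix.rank_le_card_height B
  rw [hrank, Fintype.card_coe] at this
  exact this
end
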